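/- Let A and B be unital C*-algebras and suppose there are *-isomorphisms μ : B → A and ρ : A → B such that the map (μ ⊗^γ ρ) ∘ τ is an inner automorphism of A ⊗^γ B. Then A and B are finite-dimensional; combined with simplicity, A and B are full matrix algebras. -/

import Mathlib

/-- `ι` exhibits the complete unital normed algebra `T` as the Banach space projective
tensor product `A ⊗^γ B` of the unital Banach algebras `A` and `B`: the image of `ι`
has dense span, `‖ι a b‖` is dominated by the projective cross norm, and every
contractive bilinear functional extends to a contractive functional on `T` (which pins
down the norm of `T` as the projective tensor norm). -/
structure IsProjectiveTensorProduct
    (A B T : Type) [NormedRing A] [NormedAlgebra ℂ A]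
    [NormedRing B] [NormedAlgebra ℂ B]
    [NormedRing T] [NormedAlgebra ℂ T] [CompleteSpace T]
    (ι : A →L[ℂ] B →L[ℂ] T) : Prop where
  map_one' : ι 1 1 = 1
  map_mul' : ∀ (a c : A) (b d : B), ι a b * ι c d = ι (a * c) (b * d)
  norm_le' : ∀ (a : A) (b : B), ‖ι a b‖ ≤ ‖a‖ * ‖b‖
  dense' : Dense ((Submodule.span ℂ (Set.range fun p : A × B => ι p.1 p.2) : Submodule ℂ T) : Set T)
  lift' : ∀ β : A →L[ℂ] B →L[ℂ] ℂ, ‖β‖ ≤ 1 →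
    ∃ g : T →L[ℂ] ℂ, ‖g‖ ≤ 1 ∧ ∀ (a : A) (b : B), g (ι a b) = β a b

/-- `ι` exhibits `T` as the Banach space projective tensor product `A ⊗^γ B` of the
unital C*-algebras `A` and `B`, as a Banach `*`-algebra. -/
structure IsProjectiveStarTensorProduct
    (A B T : Type) [CStarAlgebra A] [CStarAlgebra B]
    [NormedRing T] [StarRing T] [NormedAlgebra ℂ T] [CompleteSpace T]
    (ι : A →L[ℂ] B →L[ℂ] T)
    extends IsProjectiveTensorProduct A B T ι : Prop where
  map_star' : ∀ (a : A) (b : B), star (ι a b) = ι (star a) (star b)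

open Metric in
/-- Riesz-type lemma: if every vector is within `‖a‖/2` of a fixed finite-dimensional
subspace, the whole space is finite dimensional. -/
lemma aux_fd_of_approx {E : Type} [NormedAddCommGroup E] [NormedSpace ℂ E]
    (F : Submodule ℂ E) (hF : FiniteDimensional ℂ F)
    (h : ∀ a : E, ∃ y ∈ F, ‖a - y‖ ≤ (1/2) * ‖a‖) : FiniteDimensional ℂ E := by
  have hne : (F : Set E).Nonempty := ⟨0, F.zero_mem⟩
  have hmem : ∀ a : E, a ∈ F := by
    intro a
    have hclosed : IsClosed (F : Set E) := F.closed_of_finiteDimensional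
    have hd0 : infDist a (F : Set E) = 0 := by
      by_contra hd
      have hdpos : 0 < infDist a (F : Set E) :=
        lt_of_le_of_ne (infDist_nonneg) (Ne.symm hd)
      have hlt : infDist a (F : Set E) < infDist a (F : Set E) + infDist a (F : Set E) :=
        lt_add_of_pos_right _ hdpos
      obtain ⟨y, hy, hdy⟩ := (infDist_lt_iff hne).mp hlt
      obtain ⟨z, hz, hazb⟩ := h (a - y)
      have h1 : infDist a (F : Set E) ≤ dist a (y + z) :=
        infDist_le_dist_of_mem (F.add_mem hy hz)
      have h2 : dist a (y + z) = ‖(a - y) - z‖ := by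
        rw [dist_eq_norm, sub_add_eq_sub_sub]
      have h3 : ‖a - y‖ = dist a y := (dist_eq_norm a y).symm
      nlinarith [hdy, hazb, h1, h2, h3]
    have := (mem_closure_iff_infDist_zero hne).mpr hd0
    rwa [hclosed.closure_eq] at this
  have htop : F = ⊤ := by ext x; simp [hmem x]
  subst htop
  exact Module.Finite.equiv (Submodule.topEquiv : (⊤ : Submodule ℂ E) ≃ₗ[ℂ] E)

section Slice

variable {A B T : Type} [NormedRing A] [NormedAlgebra ℂ A]
    [NormedRing B] [NormedAlgebra ℂ B]
    [NormedRing T] [NormedAlgebra ℂ T] [CompleteSpace T]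
    {ι : A →L[ℂ] B →L[ℂ] T}

/-- The left slice map is contractive on the algebraic tensor span. -/
lemma aux_slice_left (hT : IsProjectiveTensorProduct A B T ι)
    (f : B →L[ℂ] ℂ) (hf : ‖f‖ ≤ 1)
    {κ : Type} [Fintype κ] (c : κ → A) (d : κ → B) :
    ‖∑ i, f (d i) • c i‖ ≤ ‖∑ i, ι (c i) (d i)‖ := by
  set v := ∑ i, f (d i) • c i with hv
  rcases eq_or_ne v 0 with h0 | h0
  · rw [h0, norm_zero]; exact norm_nonneg _
  obtain ⟨g, hg, hgv⟩ := exists_dual_vector ℂ v (norm_ne_zero_iff.mpr h0)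
  have hβ : ‖g.smulRight f‖ ≤ 1 := by
    rw [ContinuousLinearMap.norm_smulRight_apply, hg, one_mul]; exact hf
  obtain ⟨G, hG, hGι⟩ := hT.lift' (g.smulRight f) hβ
  have key : G (∑ i, ι (c i) (d i)) = g v := by
    rw [map_sum, hv, map_sum]
    refine Finset.sum_congr rfl fun i _ => ?_
    rw [hGι, map_smul]
    simp only [ContinuousLinearMap.smulRight_apply, ContinuousLinearMap.smul_apply,
      smul_eq_mul]
    ring
  calc ‖v‖ = ‖g v‖ := by rw [hgv]; simp
    _ = ‖G (∑ i, ι (c i) (d i))‖ := by rw [key]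
    _ ≤ ‖G‖ * ‖∑ i, ι (c i) (d i)‖ := G.le_opNorm _
    _ ≤ 1 * ‖∑ i, ι (c i) (d i)‖ := by gcongr
    _ = ‖∑ i, ι (c i) (d i)‖ := one_mul _

/-- The right slice map is contractive on the algebraic tensor span. -/
lemma aux_slice_right (hT : IsProjectiveTensorProduct A B T ι)
    (g : A →L[ℂ] ℂ) (hg : ‖g‖ ≤ 1)
    {κ : Type} [Fintype κ] (c : κ → A) (d : κ → B) :
    ‖∑ i, g (c i) • d i‖ ≤ ‖∑ i, ι (c i) (d i)‖ := by
  set v := ∑ i, g (c i) • d i with hv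
  rcases eq_or_ne v 0 with h0 | h0
  · rw [h0, norm_zero]; exact norm_nonneg _
  obtain ⟨f, hf, hfv⟩ := exists_dual_vector ℂ v (norm_ne_zero_iff.mpr h0)
  have hβ : ‖g.smulRight f‖ ≤ 1 := by
    rw [ContinuousLinearMap.norm_smulRight_apply, hf, mul_one]; exact hg
  obtain ⟨G, hG, hGι⟩ := hT.lift' (g.smulRight f) hβ
  have key : G (∑ i, ι (c i) (d i)) = f v := by
    rw [map_sum, hv, map_sum]
    refine Finset.sum_congr rfl fun i _ => ?_
    rw [hGι, map_smul]
    simp only [ContinuousLinearMap.smulRight_apply, ContinuousLinearMap.smul_apply,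
      smul_eq_mul]
  calc ‖v‖ = ‖f v‖ := by rw [hfv]; simp
    _ = ‖G (∑ i, ι (c i) (d i))‖ := by rw [key]
    _ ≤ ‖G‖ * ‖∑ i, ι (c i) (d i)‖ := G.le_opNorm _
    _ ≤ 1 * ‖∑ i, ι (c i) (d i)‖ := by gcongr
    _ = ‖∑ i, ι (c i) (d i)‖ := one_mul _

omit [CompleteSpace T] in
/-- Every element of the algebraic tensor span is a finite sum of elementary tensors. -/
lemma aux_rep {x : T}
    (hx : x ∈ Submodule.span ℂ (Set.range fun p : A × B => ι p.1 p.2)) :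
    ∃ (n : ℕ) (c : Fin n → A) (d : Fin n → B), x = ∑ i, ι (c i) (d i) := by
  obtain ⟨n, r, g, hsum⟩ := Submodule.mem_span_set'.mp hx
  choose p hp using fun i => (g i).2
  refine ⟨n, fun i => r i • (p i).1, fun i => (p i).2, ?_⟩
  rw [← hsum]
  refine Finset.sum_congr rfl fun i _ => ?_
  rw [map_smul, ContinuousLinearMap.smul_apply, ← hp i]

end Slice


/-- If the automorphism `(μ ⊗^γ ρ) ∘ τ` of `A ⊗^γ B` is inner, then `A` and `B` are
finite dimensional (and hence, being also simple, full matrix algebras). -/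
theorem finiteDimensional_of_flip_inner {A B T : Type} [CStarAlgebra A] [CStarAlgebra B]
    [NormedRing T] [StarRing T] [NormedAlgebra ℂ T] [CompleteSpace T]
    {ι : A →L[ℂ] B →L[ℂ] T} (hT : IsProjectiveStarTensorProduct A B T ι)
    (μ : B ≃⋆ₐ[ℂ] A) (ρ : A ≃⋆ₐ[ℂ] B)
    (u : T) (hu : star u * u = 1 ∧ u * star u = 1)
    (hinner : ∀ (a : A) (b : B), ι (μ b) (ρ a) = u * ι a b * star u) :
    FiniteDimensional ℂ A ∧ FiniteDimensional ℂ B := by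
  by_cases hB : Subsingleton B
  · haveI : Subsingleton A := (EquivLike.surjective μ).subsingleton
    constructor <;> infer_instance
  haveI : Nontrivial B := not_subsingleton_iff_nontrivial.mp hB
  haveI : Nontrivial A := by
    rcases exists_pair_ne B with ⟨b₁, b₂, hb⟩
    exact ⟨μ b₁, μ b₂, fun h => hb (EquivLike.injective μ h)⟩
  -- states on A and B
  obtain ⟨f, hf1, hfv⟩ := exists_dual_vector ℂ (1 : B) (norm_ne_zero_iff.mpr one_ne_zero)
  obtain ⟨g, hg1, hgv⟩ := exists_dual_vector ℂ (1 : A) (norm_ne_zero_iff.mpr one_ne_zero)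
  have hfone : f 1 = 1 := by rw [hfv, CStarRing.norm_one]; norm_num
  have hgone : g 1 = 1 := by rw [hgv, CStarRing.norm_one]; norm_num
  -- the approximation parameter
  set ε : ℝ := (2 * (‖u‖ + ‖star u‖ + 1))⁻¹ with hεdef
  have hC : (0:ℝ) < 2 * (‖u‖ + ‖star u‖ + 1) := by positivity
  have hε : 0 < ε := by positivity
  have hεC : ε * (2 * (‖u‖ + ‖star u‖ + 1)) = 1 := inv_mul_cancel₀ hC.ne'
  have hε1 : ε ≤ 1 := by nlinarith [norm_nonneg u, norm_nonneg (star u)]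
  -- approximate u and star u from the algebraic span
  obtain ⟨t, htmem, htd⟩ := hT.dense'.exists_dist_lt u hε
  obtain ⟨s, hsmem, hsd⟩ := hT.dense'.exists_dist_lt (star u) hε
  have htd' : ‖u - t‖ ≤ ε := by rw [← dist_eq_norm]; exact htd.le
  have hsd' : ‖star u - s‖ ≤ ε := by rw [← dist_eq_norm]; exact hsd.le
  have hsn : ‖s‖ ≤ ‖star u‖ + ε := by
    have : ‖s‖ - ‖star u‖ ≤ ‖s - star u‖ := norm_sub_norm_le s (star u)
    rw [norm_sub_rev] at this; linarith
  obtain ⟨m, p, q, htrep⟩ := aux_rep htmem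
  obtain ⟨n, r, w, hsrep⟩ := aux_rep hsmem
  have hρnorm : ∀ a : A, ‖ι 1 (ρ a)‖ ≤ ‖a‖ := fun a => by
    calc ‖ι 1 (ρ a)‖ ≤ ‖(1:A)‖ * ‖ρ a‖ := hT.norm_le' _ _
      _ = ‖a‖ := by rw [CStarRing.norm_one, one_mul, StarAlgEquiv.norm_map]
  have hμnorm : ∀ b : B, ‖ι (μ b) 1‖ ≤ ‖b‖ := fun b => by
    calc ‖ι (μ b) 1‖ ≤ ‖μ b‖ * ‖(1:B)‖ := hT.norm_le' _ _
      _ = ‖b‖ := by rw [CStarRing.norm_one, mul_one, StarAlgEquiv.norm_map]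
  -- the common norm estimate
  have hest : ∀ (x : T) (C : ℝ), ‖x‖ ≤ C →
      ‖(star u - s) * x * u + s * (x * (u - t))‖ ≤ (1/2) * C := by
    intro x C hx
    have hC0 : 0 ≤ C := le_trans (norm_nonneg x) hx
    calc ‖(star u - s) * x * u + s * (x * (u - t))‖
        ≤ ‖(star u - s) * x * u‖ + ‖s * (x * (u - t))‖ := norm_add_le _ _
      _ ≤ ‖star u - s‖ * ‖x‖ * ‖u‖ + ‖s‖ * (‖x‖ * ‖u - t‖) := by
          gcongr
          · exact le_trans (norm_mul_le _ _) (by gcongr; exact norm_mul_le _ _)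
          · exact le_trans (norm_mul_le _ _) (by gcongr; exact norm_mul_le _ _)
      _ ≤ ε * C * ‖u‖ + (‖star u‖ + ε) * (C * ε) := by
          gcongr
      _ ≤ (1/2) * C := by
          have key : ε * (‖u‖ + ‖star u‖ + ε) ≤ 1/2 := by
            nlinarith [mul_le_mul_of_nonneg_left hε1 hε.le]
          have hkey := mul_le_mul_of_nonneg_left key hC0
          nlinarith [hkey]
  -- finite dimensionality of A
  have hFDA : FiniteDimensional ℂ A := by
    set FA : Submodule ℂ A :=
      Submodule.span ℂ (Set.range fun ji : Fin n × Fin m => r ji.1 * p ji.2) with hFAdef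
    haveI : FiniteDimensional ℂ FA :=
      FiniteDimensional.span_of_finite ℂ (Set.finite_range _)
    refine aux_fd_of_approx FA inferInstance fun a => ?_
    -- slice families
    set c : Option (Fin n × Fin m) → A :=
      fun o => o.elim a (fun ji => -(r ji.1 * p ji.2)) with hc
    set d : Option (Fin n × Fin m) → B :=
      fun o => o.elim 1 (fun ji => w ji.1 * ρ a * q ji.2) with hd
    set y : A := ∑ ji : Fin n × Fin m, f (w ji.1 * ρ a * q ji.2) • (r ji.1 * p ji.2) with hy
    have hyF : y ∈ FA := by
      refine Submodule.sum_mem _ fun ji _ => Submodule.smul_mem _ _ ?_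
      exact Submodule.subset_span ⟨ji, rfl⟩
    refine ⟨y, hyF, ?_⟩
    -- identity from innerness
    have hid : ι a 1 = star u * (ι 1 (ρ a)) * u := by
      have h := hinner a 1
      rw [map_one μ] at h
      rw [h]
      have : star u * (u * ι a 1 * star u) * u
          = (star u * u) * ι a 1 * (star u * u) := by noncomm_ring
      rw [this, hu.1, one_mul, mul_one]
    -- expansion of s * ι 1 (ρ a) * t
    have hexp : s * (ι 1 (ρ a)) * t
        = ∑ ji : Fin n × Fin m, ι (r ji.1 * p ji.2) (w ji.1 * ρ a * q ji.2) := by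
      rw [hsrep, htrep, Finset.sum_mul, Finset.sum_mul, Fintype.sum_prod_type]
      refine Finset.sum_congr rfl fun j _ => ?_
      rw [Finset.mul_sum]
      refine Finset.sum_congr rfl fun i _ => ?_
      rw [hT.map_mul', hT.map_mul', mul_one]
    -- the two sums
    have hvsum : ∑ o, f (d o) • c o = a - y := by
      rw [Fintype.sum_option]
      simp only [hc, hd, Option.elim, hfone, one_smul, smul_neg]
      rw [Finset.sum_neg_distrib, ← hy, sub_eq_add_neg]
    have hxsum : ∑ o, ι (c o) (d o) = ι a 1 - s * (ι 1 (ρ a)) * t := by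
      rw [Fintype.sum_option, hexp]
      simp only [hc, hd, Option.elim, map_neg, ContinuousLinearMap.neg_apply]
      rw [Finset.sum_neg_distrib, sub_eq_add_neg]
    have hslice := aux_slice_left hT.toIsProjectiveTensorProduct f (le_of_eq hf1) c d
    rw [hvsum, hxsum] at hslice
    have hsplit : ι a 1 - s * (ι 1 (ρ a)) * t
        = (star u - s) * (ι 1 (ρ a)) * u + s * ((ι 1 (ρ a)) * (u - t)) := by
      rw [hid]; noncomm_ring
    calc ‖a - y‖ ≤ ‖ι a 1 - s * (ι 1 (ρ a)) * t‖ := hslice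
      _ = ‖(star u - s) * (ι 1 (ρ a)) * u + s * ((ι 1 (ρ a)) * (u - t))‖ := by rw [hsplit]
      _ ≤ (1/2) * ‖a‖ := hest _ _ (hρnorm a)
  -- finite dimensionality of B
  have hFDB : FiniteDimensional ℂ B := by
    set FB : Submodule ℂ B :=
      Submodule.span ℂ (Set.range fun ji : Fin n × Fin m => w ji.1 * q ji.2) with hFBdef
    haveI : FiniteDimensional ℂ FB :=
      FiniteDimensional.span_of_finite ℂ (Set.finite_range _)
    refine aux_fd_of_approx FB inferInstance fun b => ?_
    set c : Option (Fin n × Fin m) → A :=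
      fun o => o.elim 1 (fun ji => r ji.1 * μ b * p ji.2) with hc
    set d : Option (Fin n × Fin m) → B :=
      fun o => o.elim b (fun ji => -(w ji.1 * q ji.2)) with hd
    set y : B := ∑ ji : Fin n × Fin m, g (r ji.1 * μ b * p ji.2) • (w ji.1 * q ji.2) with hy
    have hyF : y ∈ FB := by
      refine Submodule.sum_mem _ fun ji _ => Submodule.smul_mem _ _ ?_
      exact Submodule.subset_span ⟨ji, rfl⟩
    refine ⟨y, hyF, ?_⟩
    have hid : ι 1 b = star u * (ι (μ b) 1) * u := by
      have h := hinner 1 b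
      rw [map_one ρ] at h
      rw [h]
      have : star u * (u * ι 1 b * star u) * u
          = (star u * u) * ι 1 b * (star u * u) := by noncomm_ring
      rw [this, hu.1, one_mul, mul_one]
    have hexp : s * (ι (μ b) 1) * t
        = ∑ ji : Fin n × Fin m, ι (r ji.1 * μ b * p ji.2) (w ji.1 * q ji.2) := by
      rw [hsrep, htrep, Finset.sum_mul, Finset.sum_mul, Fintype.sum_prod_type]
      refine Finset.sum_congr rfl fun j _ => ?_
      rw [Finset.mul_sum]
      refine Finset.sum_congr rfl fun i _ => ?_
      rw [hT.map_mul', hT.map_mul', mul_one]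
    have hvsum : ∑ o, g (c o) • d o = b - y := by
      rw [Fintype.sum_option]
      simp only [hc, hd, Option.elim, hgone, one_smul, smul_neg]
      rw [Finset.sum_neg_distrib, ← hy, sub_eq_add_neg]
    have hxsum : ∑ o, ι (c o) (d o) = ι 1 b - s * (ι (μ b) 1) * t := by
      rw [Fintype.sum_option, hexp]
      simp only [hc, hd, Option.elim, map_neg]
      rw [Finset.sum_neg_distrib, sub_eq_add_neg]
    have hslice := aux_slice_right hT.toIsProjectiveTensorProduct g (le_of_eq hg1) c d
    rw [hvsum, hxsum] at hslice
    have hsplit : ι 1 b - s * (ι (μ b) 1) * t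
        = (star u - s) * (ι (μ b) 1) * u + s * ((ι (μ b) 1) * (u - t)) := by
      rw [hid]; noncomm_ring
    calc ‖b - y‖ ≤ ‖ι 1 b - s * (ι (μ b) 1) * t‖ := hslice
      _ = ‖(star u - s) * (ι (μ b) 1) * u + s * ((ι (μ b) 1) * (u - t))‖ := by rw [hsplit]
      _ ≤ (1/2) * ‖b‖ := hest _ _ (hμnorm b)
  exact ⟨hFDA, hFDB⟩
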